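/- Let λ be the function on partitions μ (with |μ| ≤ n, μ having at least one part equal to 1, and μ not equal to the partition of n into n ones) given by f(μ) = (1 − q^{−m₁(μ)})·q^{2μ'₁}, where m₁(μ) is the number of parts of size 1 and μ'₁ the total number of parts. Then f is maximized at μ = (1^{n−1}), i.e. f(μ) ≤ (1 − q^{−(n−1)})·q^{2(n−1)} for all admissible μ, with equality iff μ = (1^{n−1}). -/
import Mathlib


/-- The function `f(μ) = (1 − q^{−m₁(μ)})·q^{2·(number of parts of μ)}`, over partitions
`μ` with `|μ| ≤ n`, at least one part equal to `1`, and `μ ≠ (1^n)`, is maximized exactly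
at `μ = (1^{n−1})`. -/
theorem stmt11 (n : ℕ) (hn : 2 ≤ n) (q : ℝ) (hq : 2 ≤ q)
    (μ : Multiset ℕ) (hpos : ∀ x ∈ μ, 0 < x) (hsize : μ.sum ≤ n)
    (h1 : 1 ≤ μ.count 1) (hne : μ ≠ Multiset.replicate n 1) :
    (1 - q⁻¹ ^ μ.count 1) * q ^ (2 * Multiset.card μ) ≤
        (1 - q⁻¹ ^ (n - 1)) * q ^ (2 * (n - 1)) ∧
      ((1 - q⁻¹ ^ μ.count 1) * q ^ (2 * Multiset.card μ) =
          (1 - q⁻¹ ^ (n - 1)) * q ^ (2 * (n - 1)) ↔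
        μ = Multiset.replicate (n - 1) 1) := by
  have hq0 : (0:ℝ) < q := by linarith
  have hqi0 : (0:ℝ) < q⁻¹ := inv_pos.mpr hq0
  have hqi2 : q⁻¹ ≤ 1/2 := by
    rw [inv_le_comm₀ hq0 (by norm_num)]
    linarith
  have hqi1 : q⁻¹ < 1 := by linarith
  set m := μ.count 1 with hm
  set k := Multiset.card μ with hk
  have hmk : m ≤ k := Multiset.count_le_card 1 μ
  have hks : k ≤ μ.sum := by
    have := Multiset.card_nsmul_le_sum (s := μ) (a := 1) (fun x hx => hpos x hx)
    simpa using this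
  have hkn : k ≤ n := hks.trans hsize
  have hkne : k ≠ n := by
    intro hkn'
    apply hne
    have hsum : μ.sum = k := le_antisymm (hkn' ▸ hsize) hks
    have hall : ∀ x ∈ μ, x = 1 := by
      intro x hx
      by_contra hx1
      have hx2 : 2 ≤ x := by have := hpos x hx; omega
      have he : μ.sum = x + (μ.erase x).sum := by
        rw [← Multiset.sum_cons, Multiset.cons_erase hx]
      have hce : Multiset.card (μ.erase x) = k - 1 := by
        rw [Multiset.card_erase_of_mem hx]; rfl
      have hes : k - 1 ≤ (μ.erase x).sum := by
        have := Multiset.card_nsmul_le_sum (s := μ.erase x) (a := 1)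
          (fun y hy => hpos y (Multiset.mem_of_mem_erase hy))
        simpa [hce] using this
      have hk1 : 1 ≤ k := by
        rw [hk]; exact Multiset.card_pos_iff_exists_mem.mpr ⟨x, hx⟩
      omega
    show μ = Multiset.replicate n 1
    exact Multiset.eq_replicate.mpr ⟨by omega, hall⟩
  have hkn1 : k ≤ n - 1 := by omega
  -- positivity facts
  have hA1 : q⁻¹ ^ m < 1 := pow_lt_one₀ hqi0.le hqi1 (by omega)
  have hB2 : q⁻¹ ^ (n-1) ≤ 1/2 := by
    calc q⁻¹ ^ (n-1) ≤ q⁻¹ ^ 1 := pow_le_pow_of_le_one hqi0.le hqi1.le (by omega)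
    _ ≤ 1/2 := by simpa using hqi2
  rcases (by omega : k = n - 1 ∨ k ≤ n - 2) with hknn | hknn
  · -- equal card case
    have hmn1 : m ≤ n - 1 := hknn ▸ hmk
    have hAB : q⁻¹ ^ (n-1) ≤ q⁻¹ ^ m := pow_le_pow_of_le_one hqi0.le hqi1.le hmn1
    have hqpow : (0:ℝ) < q ^ (2 * (n-1)) := pow_pos hq0 _
    constructor
    · rw [hknn]
      exact mul_le_mul_of_nonneg_right (by linarith) hqpow.le
    · constructor
      · intro heq
        rw [hknn] at heq
        have : q⁻¹ ^ m = q⁻¹ ^ (n-1) := by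
          have := mul_right_cancel₀ (ne_of_gt hqpow) heq
          linarith
        have hmn : m = n - 1 := by
          by_contra hc
          have hlt : m < n - 1 := by omega
          have := pow_lt_pow_right_of_lt_one₀ hqi0 hqi1 hlt
          linarith
        have hall := Multiset.count_eq_card.mp
          (show Multiset.count 1 μ = Multiset.card μ by omega)
        exact Multiset.eq_replicate.mpr ⟨by omega, fun b hb => (hall b hb).symm⟩
      · intro hrep
        rw [hm, hk, hrep]
        simp
  · -- small card case: strict
    have hstrict : (1 - q⁻¹ ^ m) * q ^ (2 * k) < (1 - q⁻¹ ^ (n-1)) * q ^ (2 * (n-1)) := by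
      have h1lt : (1 - q⁻¹ ^ m) * q ^ (2 * k) < q ^ (2 * k) := by
        have hqpow : (0:ℝ) < q ^ (2 * k) := pow_pos hq0 _
        nlinarith [pow_pos hqi0 m]
      have h2le : q ^ (2 * k) ≤ q ^ (2 * (n-2)) := by
        apply pow_le_pow_right₀ (by linarith)
        omega
      have h3 : q ^ (2 * (n-2)) ≤ (1 - q⁻¹ ^ (n-1)) * q ^ (2 * (n-1)) := by
        have hsplit : q ^ (2 * (n-1)) = q ^ (2 * (n-2)) * q ^ 2 := by
          rw [← pow_add]; congr 1; omega
        rw [hsplit]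
        have hp : (0:ℝ) < q ^ (2 * (n-2)) := pow_pos hq0 _
        have hq2 : (4:ℝ) ≤ q ^ 2 := by nlinarith
        nlinarith [mul_pos hp (by positivity : (0:ℝ) < q ^ 2)]
      linarith
    refine ⟨hstrict.le, ?_, ?_⟩
    · intro heq; exact absurd heq hstrict.ne
    · intro hrep
      exfalso
      have : k = n - 1 := by rw [hk, hrep]; simp
      omega
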